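/- arXiv:1808.01071 — 5 statements merged into one kernel-verified Lean document; each statement's English description precedes it below -/
import Mathlib

section
/- Two p-strings X and Y of equal length parameterized-match (i.e., there exists a bijection f on Σ ∪ Π with f(a) = a for all a ∈ Σ and f(X[i]) = Y[i] for all i) if and only if their previous encodings are equal: prev(X) = prev(Y). -/
open List

variable {α : Type} [DecidableEq α]

/-- The previous encoding entry at (0-based) position `i` of a p-string `S`,
over static alphabet `Sig`. -/
def prevEncAt (Sig : Set α) [DecidablePred (· ∈ Sig)] (S : List α) (i : ℕ) : α ⊕ ℕ :=
  match S[i]? with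
  | none => Sum.inr 0
  | some c =>
    if c ∈ Sig then Sum.inl c
    else if (List.range i).any (fun j => decide (S[j]? = some c)) then
      Sum.inr (i - Nat.findGreatest (fun j => S[j]? = some c) (i - 1))
    else Sum.inr 0

/-- The previous encoding of a p-string `S`. -/
def prevEnc (Sig : Set α) [DecidablePred (· ∈ Sig)] (S : List α) : List (α ⊕ ℕ) :=
  (List.range S.length).map (prevEncAt Sig S)

/-- Two p-strings parameterized match: equal length and a bijection on characters
fixing the static alphabet pointwise maps one onto the other. -/
def PMatch (Sig : Set α) (X Y : List α) : Prop :=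
  X.length = Y.length ∧ ∃ f : α ≃ α, (∀ a ∈ Sig, f a = a) ∧ X.map f = Y

/-- Length of the shortest prefix of `S` not yet a node of `N`
(defaults to `S.length` if all prefixes are nodes). -/
def insLen {β : Type} [DecidableEq β] (N : Finset (List β)) (S : List β) : ℕ :=
  (((List.range (S.length + 1)).filter (fun m => decide (S.take m ∉ N))).head?).getD S.length

/-- The node set of the sequence hash tree of a sequence of strings,
built incrementally: each step inserts the shortest prefix of the current
string that is not yet a node. -/
def SHTNodes {β : Type} [DecidableEq β] (L : List (List β)) : Finset (List β) :=
  L.foldl (fun N S => insert (S.take (insLen N S)) N) ∅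

/-- The sequence ⟨ε, prev(T[n..]), ..., prev(T[1..])⟩ of previous-encoded
suffixes of `T` in increasing length order. -/
def pphSeq (Sig : Set α) [DecidablePred (· ∈ Sig)] (T : List α) : List (List (α ⊕ ℕ)) :=
  [] :: (List.range T.length).map (fun k => prevEnc Sig (T.drop (T.length - 1 - k)))

/-- The node set of the parameterized position heap `PPH(T)`. -/
def pphNodes (Sig : Set α) [DecidablePred (· ∈ Sig)] (T : List α) : Finset (List (α ⊕ ℕ)) :=
  SHTNodes (pphSeq Sig T)

/-- `a ∈ Σ ∪ {0}` as a character of a previous encoding. -/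
def StaticOrZero (Sig : Set α) (a : α ⊕ ℕ) : Prop :=
  (∃ c ∈ Sig, a = Sum.inl c) ∨ a = Sum.inr 0

/-- Reversed suffix link `rslink(a, v) = u` in a position heap with node set `N`
for a text of length `n`. -/
def RSLink (Sig : Set α) (n : ℕ) (N : Finset (List (α ⊕ ℕ)))
    (a : α ⊕ ℕ) (v u : List (α ⊕ ℕ)) : Prop :=
  v ∈ N ∧ u ∈ N ∧
    ((StaticOrZero Sig a ∧ u = a :: v) ∨
     (∃ d : ℕ, a = Sum.inr d ∧ 1 ≤ d ∧ d ≤ n - 1 ∧ v[d - 1]? = some (Sum.inr 0) ∧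
       u = Sum.inr 0 :: (v.take (d - 1) ++ [Sum.inr d] ++ v.drop d)))

private lemma findGreatest_congr' {P Q : ℕ → Prop} [DecidablePred P] [DecidablePred Q]
    (h : ∀ n, P n ↔ Q n) : ∀ n, Nat.findGreatest P n = Nat.findGreatest Q n
  | 0 => rfl
  | n+1 => by
    rw [Nat.findGreatest_succ, Nat.findGreatest_succ]
    by_cases hP : P (n+1)
    · rw [if_pos hP, if_pos ((h _).mp hP)]
    · rw [if_neg hP, if_neg (fun hq => hP ((h _).mpr hq)), findGreatest_congr' h n]

private lemma prevEnc_eq_pointwise {Sig : Set α} [DecidablePred (· ∈ Sig)] {X Y : List α}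
    (hlen : X.length = Y.length) (h : prevEnc Sig X = prevEnc Sig Y) :
    ∀ i < X.length, prevEncAt Sig X i = prevEncAt Sig Y i := by
  intro i hi
  have h2 := congrArg (fun l => l[i]?) h
  simpa [prevEnc, hi, hlen ▸ hi] using h2

private lemma key_sig {Sig : Set α} [DecidablePred (· ∈ Sig)] {X Y : List α}
    (hlen : X.length = Y.length)
    (hp : ∀ i < X.length, prevEncAt Sig X i = prevEncAt Sig Y i)
    (i : ℕ) (hi : i < X.length) :
    (X[i]'hi ∈ Sig ↔ Y[i]'(hlen ▸ hi) ∈ Sig) ∧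
      (X[i]'hi ∈ Sig → Y[i]'(hlen ▸ hi) = X[i]'hi) := by
  have hiY : i < Y.length := hlen ▸ hi
  have h := hp i hi
  simp only [prevEncAt, List.getElem?_eq_getElem hi, List.getElem?_eq_getElem hiY] at h
  by_cases hxs : X[i]'hi ∈ Sig <;> by_cases hys : Y[i]'hiY ∈ Sig
  · rw [if_pos hxs, if_pos hys] at h
    exact ⟨by simp [hxs, hys], fun _ => (Sum.inl.inj h).symm⟩
  · rw [if_pos hxs, if_neg hys] at h
    exfalso; split at h <;> cases h
  · rw [if_neg hxs, if_pos hys] at h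
    exfalso; split at h <;> cases h
  · exact ⟨by simp [hxs, hys], fun hc => absurd hc hxs⟩

private lemma key_eq {Sig : Set α} [DecidablePred (· ∈ Sig)] {X Y : List α}
    (hlen : X.length = Y.length)
    (hp : ∀ i < X.length, prevEncAt Sig X i = prevEncAt Sig Y i) :
    ∀ j, j < X.length → ∀ i, i ≤ j → X[i]? = X[j]? → Y[i]? = Y[j]? := by
  intro j
  induction j using Nat.strong_induction_on with
  | _ j IH =>
    intro hj i hij hXij
    rcases eq_or_lt_of_le hij with rfl | hij'
    · rfl
    have hi : i < X.length := hij'.trans hj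
    have hiY : i < Y.length := hlen ▸ hi
    have hjY : j < Y.length := hlen ▸ hj
    have hXi : X[i]? = some (X[j]'hj) := by
      rw [hXij]; exact List.getElem?_eq_getElem hj
    by_cases hxs : X[j]'hj ∈ Sig
    · -- static case: X[i] = X[j] ∈ Sig
      have hxi : X[i]'hi ∈ Sig := by
        have : X[i]'hi = X[j]'hj := by
          have := List.getElem?_eq_getElem hi; rw [hXi] at this; exact (Option.some.inj this).symm
        rwa [this]
      have h1 := (key_sig hlen hp i hi).2 hxi
      have h2 := (key_sig hlen hp j hj).2 hxs
      rw [List.getElem?_eq_getElem hiY, List.getElem?_eq_getElem hjY, h1, h2]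
      have := List.getElem?_eq_getElem hi; rw [hXi] at this
      rw [(Option.some.inj this).symm]
    · -- parameter case
      have hys : ¬ (Y[j]'hjY ∈ Sig) := fun hc => hxs ((key_sig hlen hp j hj).1.mpr hc)
      have h := hp j hj
      simp only [prevEncAt, List.getElem?_eq_getElem hj, List.getElem?_eq_getElem hjY] at h
      rw [if_neg hxs, if_neg hys] at h
      have hanyX : (List.range j).any (fun k => decide (X[k]? = some (X[j]'hj))) = true := by
        simp only [List.any_eq_true, List.mem_range, decide_eq_true_eq]
        exact ⟨i, hij', hXi⟩
      rw [if_pos hanyX] at h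
      have hgXle : Nat.findGreatest (fun k => X[k]? = some (X[j]'hj)) (j-1) ≤ j - 1 :=
        Nat.findGreatest_le _
      have hij1 : i ≤ j - 1 := by omega
      by_cases hanyY : (List.range j).any (fun k => decide (Y[k]? = some (Y[j]'hjY))) = true
      · rw [if_pos hanyY] at h
        set gX := Nat.findGreatest (fun k => X[k]? = some (X[j]'hj)) (j-1) with hgX
        set gY := Nat.findGreatest (fun k => Y[k]? = some (Y[j]'hjY)) (j-1) with hgY
        have hgYle : gY ≤ j - 1 := by
          rw [hgY]; exact Nat.findGreatest_le (P := fun k => Y[k]? = some (Y[j]'hjY)) _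
        have hgeq : gX = gY := by
          have := Sum.inr.inj h; omega
        have hpXg : X[gX]? = some (X[j]'hj) := by
          rw [hgX]
          exact Nat.findGreatest_spec (P := fun k => X[k]? = some (X[j]'hj)) (n := j - 1) hij1 hXi
        have higX : i ≤ gX := by
          rw [hgX]
          exact Nat.le_findGreatest (P := fun k => X[k]? = some (X[j]'hj)) hij1 hXi
        obtain ⟨k, hk, hpYk⟩ : ∃ k, k < j ∧ Y[k]? = some (Y[j]'hjY) := by
          simpa only [List.any_eq_true, List.mem_range, decide_eq_true_eq] using hanyY
        have hk1 : k ≤ j - 1 := by omega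
        have hpYg : Y[gY]? = some (Y[j]'hjY) := by
          rw [hgY]
          exact Nat.findGreatest_spec (P := fun k => Y[k]? = some (Y[j]'hjY)) (n := j - 1) hk1 hpYk
        have hXigX : X[i]? = X[gX]? := by rw [hXi, hpXg]
        have hind := IH gX (by omega) (by omega : gX < X.length) i higX hXigX
        rw [hind, hgeq, hpYg, List.getElem?_eq_getElem hjY]
      · rw [if_neg hanyY] at h
        have := Sum.inr.inj h; omega

private lemma pmatch_imp_prevEnc {Sig : Set α} [DecidablePred (· ∈ Sig)] {X Y : List α}
    (hlen : X.length = Y.length) (f : α ≃ α) (hfix : ∀ a ∈ Sig, f a = a)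
    (hmap : X.map f = Y) : prevEnc Sig X = prevEnc Sig Y := by
  have hY : ∀ k : ℕ, Y[k]? = Option.map f X[k]? := by
    intro k; rw [← hmap, List.getElem?_map]
  unfold prevEnc
  rw [← hlen]
  apply List.map_congr_left
  intro i hi
  rw [List.mem_range] at hi
  have hiY : i < Y.length := hlen ▸ hi
  have hYi : Y[i]'hiY = f (X[i]'hi) := by
    have := hY i
    rw [List.getElem?_eq_getElem hiY, List.getElem?_eq_getElem hi] at this
    exact Option.some.inj this
  have hsig : X[i]'hi ∈ Sig ↔ f (X[i]'hi) ∈ Sig := by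
    constructor
    · intro h; rwa [hfix _ h]
    · intro h
      have h2 : f (f (X[i]'hi)) = f (X[i]'hi) := hfix _ h
      have := f.injective h2
      rwa [this] at h
  have hpred : ∀ k : ℕ, (X[k]? = some (X[i]'hi)) ↔ (Y[k]? = some (f (X[i]'hi))) := by
    intro k
    rw [hY k]
    cases hw : X[k]? with
    | none => simp
    | some w =>
      simp only [Option.map_some, Option.some.injEq]
      exact ⟨fun h => by rw [h], fun h => f.injective h⟩
  simp only [prevEncAt, List.getElem?_eq_getElem hi, List.getElem?_eq_getElem hiY, hYi]
  by_cases hxs : X[i]'hi ∈ Sig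
  · rw [if_pos hxs, if_pos (hsig.mp hxs), hfix _ hxs]
  · rw [if_neg hxs, if_neg (fun hc => hxs (hsig.mpr hc))]
    have hany : ((List.range i).any (fun k => decide (X[k]? = some (X[i]'hi))))
        = ((List.range i).any (fun k => decide (Y[k]? = some (f (X[i]'hi))))) := by
      cases hb : (List.range i).any (fun k => decide (Y[k]? = some (f (X[i]'hi))))
      · simp only [List.any_eq_false, List.mem_range, decide_eq_true_eq] at hb ⊢
        intro k hk; rw [hpred k]; exact hb k hk
      · simp only [List.any_eq_true, List.mem_range, decide_eq_true_eq] at hb ⊢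
        obtain ⟨k, hk, h⟩ := hb; exact ⟨k, hk, (hpred k).mpr h⟩
    rw [hany, findGreatest_congr' hpred (i - 1)]

theorem stmt0 (Sig Par : Set α) [DecidablePred (· ∈ Sig)]
    (hdisj : Disjoint Sig Par)
    (X Y : List α) (hX : ∀ c ∈ X, c ∈ Sig ∪ Par) (hY : ∀ c ∈ Y, c ∈ Sig ∪ Par)
    (hlen : X.length = Y.length) :
    PMatch Sig X Y ↔ prevEnc Sig X = prevEnc Sig Y := by
  constructor
  · rintro ⟨-, f, hfix, hmap⟩
    exact pmatch_imp_prevEnc hlen f hfix hmap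
  · intro hprev
    classical
    refine ⟨hlen, ?_⟩
    have hp : ∀ i < X.length, prevEncAt Sig X i = prevEncAt Sig Y i :=
      prevEnc_eq_pointwise hlen hprev
    have hpY : ∀ i < Y.length, prevEncAt Sig Y i = prevEncAt Sig X i :=
      prevEnc_eq_pointwise hlen.symm hprev.symm
    have hC := key_eq hlen hp
    have hCY := key_eq hlen.symm hpY
    -- first-occurrence maps
    set h0 : α → α := fun a =>
      if h : ∃ k, X[k]? = some a then (Y[Nat.find h]?).getD a else a with hh0
    set h0' : α → α := fun a =>
      if h : ∃ k, Y[k]? = some a then (X[Nat.find h]?).getD a else a with hh0'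
    -- workhorse: h0 maps X[i] to Y[i] for parameter positions
    have hw : ∀ i (hi : i < X.length), h0 (X[i]'hi) = Y[i]'(hlen ▸ hi) := by
      intro i hi
      have hiY : i < Y.length := hlen ▸ hi
      have hex : ∃ k, X[k]? = some (X[i]'hi) := ⟨i, List.getElem?_eq_getElem hi⟩
      have hm : X[Nat.find hex]? = some (X[i]'hi) := Nat.find_spec hex
      have hmle : Nat.find hex ≤ i := Nat.find_min' hex (List.getElem?_eq_getElem hi)
      have hYmi : Y[Nat.find hex]? = Y[i]? := by
        apply hC i hi (Nat.find hex) hmle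
        rw [hm, List.getElem?_eq_getElem hi]
      simp only [hh0]
      simp only [dif_pos hex]
      rw [hYmi, List.getElem?_eq_getElem hiY, Option.getD_some]
    have hw' : ∀ i (hi : i < Y.length), h0' (Y[i]'hi) = X[i]'(hlen.symm ▸ hi) := by
      intro i hi
      have hiX : i < X.length := hlen.symm ▸ hi
      have hex : ∃ k, Y[k]? = some (Y[i]'hi) := ⟨i, List.getElem?_eq_getElem hi⟩
      have hm : Y[Nat.find hex]? = some (Y[i]'hi) := Nat.find_spec hex
      have hmle : Nat.find hex ≤ i := Nat.find_min' hex (List.getElem?_eq_getElem hi)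
      have hXmi : X[Nat.find hex]? = X[i]? := by
        apply hCY i hi (Nat.find hex) hmle
        rw [hm, List.getElem?_eq_getElem hi]
      simp only [hh0']
      simp only [dif_pos hex]
      rw [hXmi, List.getElem?_eq_getElem hiX, Option.getD_some]
    set P : Finset α := X.toFinset.filter (· ∉ Sig) with hPdef
    set Q : Finset α := Y.toFinset.filter (· ∉ Sig) with hQdef
    have hmemP : ∀ a, a ∈ P ↔ (∃ i, ∃ hi : i < X.length, X[i]'hi = a) ∧ a ∉ Sig := by
      intro a; rw [hPdef]; simp [List.mem_iff_getElem]
    have hmemQ : ∀ a, a ∈ Q ↔ (∃ i, ∃ hi : i < Y.length, Y[i]'hi = a) ∧ a ∉ Sig := by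
      intro a; rw [hQdef]; simp [List.mem_iff_getElem]
    have hPQ : ∀ a ∈ P, h0 a ∈ Q := by
      intro a ha
      obtain ⟨⟨i, hi, rfl⟩, hns⟩ := (hmemP a).mp ha
      rw [hw i hi, hmemQ]
      refine ⟨⟨i, hlen ▸ hi, rfl⟩, ?_⟩
      exact fun hc => hns (((key_sig hlen hp i hi).1).mpr hc)
    have hQP : ∀ b ∈ Q, h0' b ∈ P := by
      intro b hb
      obtain ⟨⟨i, hi, rfl⟩, hns⟩ := (hmemQ b).mp hb
      rw [hw' i hi, hmemP]
      refine ⟨⟨i, hlen.symm ▸ hi, rfl⟩, ?_⟩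
      exact fun hc => hns (((key_sig hlen.symm hpY i hi).1).mpr hc)
    have hinv1 : ∀ a ∈ P, h0' (h0 a) = a := by
      intro a ha
      obtain ⟨⟨i, hi, rfl⟩, hns⟩ := (hmemP a).mp ha
      rw [hw i hi, hw' i (hlen ▸ hi)]
    have hinv2 : ∀ b ∈ Q, h0 (h0' b) = b := by
      intro b hb
      obtain ⟨⟨i, hi, rfl⟩, hns⟩ := (hmemQ b).mp hb
      rw [hw' i hi, hw i (hlen.symm ▸ hi)]
    have hcard : P.card = Q.card := by
      apply Finset.card_bij (fun a _ => h0 a) hPQ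
      · intro a1 ha1 a2 ha2 h
        rw [← hinv1 a1 ha1, ← hinv1 a2 ha2, h]
      · intro b hb
        exact ⟨h0' b, hQP b hb, hinv2 b hb⟩
    have hcard2 : (Q \ P).card = (P \ Q).card := Finset.card_sdiff_comm hcard.symm
    set e := Finset.equivOfCardEq hcard2 with he
    set f : α → α := fun a =>
      if a ∈ P then h0 a else if h : a ∈ Q \ P then (e ⟨a, h⟩ : α) else a with hf
    set g : α → α := fun b =>
      if b ∈ Q then h0' b else if h : b ∈ P \ Q then (e.symm ⟨b, h⟩ : α) else b with hg
    have hleft : ∀ a, g (f a) = a := by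
      intro a
      by_cases haP : a ∈ P
      · simp only [hf]; simp only [if_pos haP]
        simp only [hg]; rw [if_pos (hPQ a haP)]
        exact hinv1 a haP
      · by_cases haQP : a ∈ Q \ P
        · simp only [hf]; simp only [if_neg haP, dif_pos haQP]
          have hmem : ((e ⟨a, haQP⟩ : α)) ∈ P \ Q := (e ⟨a, haQP⟩).2
          have hnQ : ((e ⟨a, haQP⟩ : α)) ∉ Q := (Finset.mem_sdiff.mp hmem).2
          simp only [hg]; simp only [if_neg hnQ, dif_pos hmem]
          have : (⟨(e ⟨a, haQP⟩ : α), hmem⟩ : {x // x ∈ P \ Q}) = e ⟨a, haQP⟩ :=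
            Subtype.ext rfl
          rw [this, Equiv.symm_apply_apply]
        · simp only [hf]; simp only [if_neg haP, dif_neg haQP]
          have hnQ : a ∉ Q := fun hq => haQP (Finset.mem_sdiff.mpr ⟨hq, haP⟩)
          have hnPQ : a ∉ P \ Q := fun hq => haP (Finset.mem_sdiff.mp hq).1
          simp only [hg]; simp only [if_neg hnQ, dif_neg hnPQ]
    have hright : ∀ b, f (g b) = b := by
      intro b
      by_cases hbQ : b ∈ Q
      · simp only [hg]; simp only [if_pos hbQ]
        simp only [hf]; rw [if_pos (hQP b hbQ)]
        exact hinv2 b hbQ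
      · by_cases hbPQ : b ∈ P \ Q
        · simp only [hg]; simp only [if_neg hbQ, dif_pos hbPQ]
          have hmem : ((e.symm ⟨b, hbPQ⟩ : α)) ∈ Q \ P := (e.symm ⟨b, hbPQ⟩).2
          have hnP : ((e.symm ⟨b, hbPQ⟩ : α)) ∉ P := (Finset.mem_sdiff.mp hmem).2
          simp only [hf]; simp only [if_neg hnP, dif_pos hmem]
          have : (⟨(e.symm ⟨b, hbPQ⟩ : α), hmem⟩ : {x // x ∈ Q \ P}) = e.symm ⟨b, hbPQ⟩ :=
            Subtype.ext rfl
          rw [this, Equiv.apply_symm_apply]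
        · simp only [hg]; simp only [if_neg hbQ, dif_neg hbPQ]
          have hnP : b ∉ P := fun hq => hbPQ (Finset.mem_sdiff.mpr ⟨hq, hbQ⟩)
          have hnQP : b ∉ Q \ P := fun hq => hbQ (Finset.mem_sdiff.mp hq).1
          simp only [hf]; simp only [if_neg hnP, dif_neg hnQP]
    refine ⟨⟨f, g, hleft, hright⟩, ?_, ?_⟩
    · intro a ha
      have hnP : a ∉ P := by rw [hmemP]; tauto
      have hnQP : a ∉ Q \ P := by
        intro hq
        have := (Finset.mem_sdiff.mp hq).1
        rw [hmemQ] at this; exact this.2 ha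
      show f a = a
      simp only [hf]; simp only [if_neg hnP, dif_neg hnQP]
    · show X.map f = Y
      apply List.ext_getElem
      · rw [List.length_map, hlen]
      intro i h1 h2
      rw [List.getElem_map]
      have hi : i < X.length := by rwa [List.length_map] at h1
      show f (X[i]'hi) = Y[i]'h2
      by_cases hxs : X[i]'hi ∈ Sig
      · have hnP : X[i]'hi ∉ P := by rw [hmemP]; tauto
        have hnQP : X[i]'hi ∉ Q \ P := by
          intro hq
          have := (Finset.mem_sdiff.mp hq).1
          rw [hmemQ] at this; exact this.2 hxs
        simp only [hf]; simp only [if_neg hnP, dif_neg hnQP]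
        exact ((key_sig hlen hp i hi).2 hxs).symm
      · have hP : X[i]'hi ∈ P := (hmemP _).mpr ⟨⟨i, hi, rfl⟩, hxs⟩
        simp only [hf]; simp only [if_pos hP]
        exact hw i hi
end

section
/- The previous encoding restricted to p-strings over Π only is injective up to renaming: for p-strings X and Y of equal length, prev(X) = prev(Y) implies that the relation {(X[i], Y[i]) : 1 ≤ i ≤ |X|} is a partial bijection (i.e., X[i] = X[j] if and only if Y[i] = Y[j] for all i, j). -/
open List

variable {α : Type} [DecidableEq α]

lemma prevAux (X Y : List α)
    (hiff : ∀ i < X.length, ((∃ j < i, X[j]? = X[i]?) ↔ (∃ j < i, Y[j]? = Y[i]?)))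
    (heq : ∀ i < X.length, (∃ j < i, X[j]? = X[i]?) →
      Nat.findGreatest (fun j => X[j]? = X[i]?) (i-1)
        = Nat.findGreatest (fun j => Y[j]? = Y[i]?) (i-1)) :
    ∀ j, ∀ i < j, j < X.length → X[i]? = X[j]? → Y[i]? = Y[j]? := by
  intro j
  induction j using Nat.strong_induction_on with
  | _ j IH =>
    intro i hij hjn hXeq
    have hex : ∃ k < j, X[k]? = X[j]? := ⟨i, hij, hXeq⟩
    have hexY : ∃ k < j, Y[k]? = Y[j]? := (hiff j hjn).mp hex
    have hpY : Nat.findGreatest (fun k : ℕ => X[k]? = X[j]?) (j-1)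
        = Nat.findGreatest (fun k : ℕ => Y[k]? = Y[j]?) (j-1) := heq j hjn hex
    have hple : Nat.findGreatest (fun k : ℕ => X[k]? = X[j]?) (j-1) ≤ j - 1 :=
      Nat.findGreatest_le _
    have hip : i ≤ Nat.findGreatest (fun k : ℕ => X[k]? = X[j]?) (j-1) :=
      Nat.le_findGreatest (by omega) hXeq
    have hpX : X[(Nat.findGreatest (fun k : ℕ => X[k]? = X[j]?) (j-1))]? = X[j]? :=
      Nat.findGreatest_spec (P := fun k : ℕ => X[k]? = X[j]?) (show i ≤ j-1 by omega) hXeq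
    obtain ⟨k, hk, hkY⟩ := hexY
    have hpYs : Y[(Nat.findGreatest (fun k : ℕ => X[k]? = X[j]?) (j-1))]? = Y[j]? := by
      rw [hpY]
      exact Nat.findGreatest_spec (P := fun k : ℕ => Y[k]? = Y[j]?) (show k ≤ j-1 by omega) hkY
    generalize hgen : Nat.findGreatest (fun k : ℕ => X[k]? = X[j]?) (j-1) = p
      at hple hip hpX hpYs
    rcases eq_or_lt_of_le hip with heqip | hlt
    · rw [heqip]; exact hpYs
    · exact (IH p (by omega) i hlt (by omega) (hXeq.trans hpX.symm)).trans hpYs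

lemma encInfo (Sig : Set α) [DecidablePred (· ∈ Sig)] (X Y : List α)
    (hX : ∀ c ∈ X, c ∉ Sig) (hY : ∀ c ∈ Y, c ∉ Sig)
    (hlen : X.length = Y.length) (h : prevEnc Sig X = prevEnc Sig Y) :
    ∀ i < X.length, ((∃ j < i, X[j]? = X[i]?) ↔ (∃ j < i, Y[j]? = Y[i]?)) ∧
      ((∃ j < i, X[j]? = X[i]?) →
        Nat.findGreatest (fun j => X[j]? = X[i]?) (i-1)
          = Nat.findGreatest (fun j => Y[j]? = Y[i]?) (i-1)) := by
  intro i hi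
  have hiY : i < Y.length := hlen ▸ hi
  obtain ⟨cx, hXi⟩ : ∃ c, X[i]? = some c := ⟨X[i], List.getElem?_eq_getElem hi⟩
  obtain ⟨cy, hYi⟩ : ∃ c, Y[i]? = some c := ⟨Y[i], List.getElem?_eq_getElem hiY⟩
  have hcx : cx ∉ Sig := by
    obtain ⟨hlt, rfl⟩ := List.getElem?_eq_some_iff.mp hXi
    exact hX _ (List.getElem_mem hlt)
  have hcy : cy ∉ Sig := by
    obtain ⟨hlt, rfl⟩ := List.getElem?_eq_some_iff.mp hYi
    exact hY _ (List.getElem_mem hlt)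
  have hpt : prevEncAt Sig X i = prevEncAt Sig Y i := by
    have := congrArg (fun l => l[i]?) h
    simpa [prevEnc, List.getElem?_map, List.getElem?_range, hi, hiY] using this
  have hEX : prevEncAt Sig X i =
      if (List.range i).any (fun j => decide (X[j]? = some cx)) then
        Sum.inr (i - Nat.findGreatest (fun j => X[j]? = some cx) (i - 1))
      else Sum.inr 0 := by
    rw [prevEncAt, hXi]; simp [hcx]
  have hEY : prevEncAt Sig Y i =
      if (List.range i).any (fun j => decide (Y[j]? = some cy)) then
        Sum.inr (i - Nat.findGreatest (fun j => Y[j]? = some cy) (i - 1))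
      else Sum.inr 0 := by
    rw [prevEncAt, hYi]; simp [hcy]
  rw [hEX, hEY] at hpt
  have haX : ((List.range i).any (fun j => decide (X[j]? = some cx)) = true) ↔
      (∃ j < i, X[j]? = some cx) := by
    simp [List.any_eq_true]
  have haY : ((List.range i).any (fun j => decide (Y[j]? = some cy)) = true) ↔
      (∃ j < i, Y[j]? = some cy) := by
    simp [List.any_eq_true]
  simp only [hXi, hYi]
  by_cases hA : ∃ j < i, X[j]? = some cx <;> by_cases hB : ∃ j < i, Y[j]? = some cy
  · rw [if_pos (haX.mpr hA), if_pos (haY.mpr hB)] at hpt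
    have h1 : Nat.findGreatest (fun j => X[j]? = some cx) (i - 1) ≤ i - 1 := Nat.findGreatest_le _
    have h2 : Nat.findGreatest (fun j => Y[j]? = some cy) (i - 1) ≤ i - 1 := Nat.findGreatest_le _
    have hi1 : 1 ≤ i := by
      obtain ⟨k, hk, -⟩ := id hA
      omega
    have hinj := Sum.inr.inj hpt
    refine ⟨iff_of_true hA hB, fun _ => ?_⟩
    generalize hg1 : Nat.findGreatest (fun j => X[j]? = some cx) (i - 1) = g1 at hinj h1 ⊢
    generalize hg2 : Nat.findGreatest (fun j => Y[j]? = some cy) (i - 1) = g2 at hinj h2 ⊢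
    omega
  · rw [if_pos (haX.mpr hA), if_neg (by simpa [haY] using hB)] at hpt
    have h1 : Nat.findGreatest (fun j => X[j]? = some cx) (i - 1) ≤ i - 1 := Nat.findGreatest_le _
    have hi1 : 1 ≤ i := by
      obtain ⟨k, hk, -⟩ := id hA
      omega
    have hinj := Sum.inr.inj hpt
    generalize hg1 : Nat.findGreatest (fun j => X[j]? = some cx) (i - 1) = g1 at hinj h1
    exact absurd hinj (by omega)
  · rw [if_neg (by simpa [haX] using hA), if_pos (haY.mpr hB)] at hpt
    have h2 : Nat.findGreatest (fun j => Y[j]? = some cy) (i - 1) ≤ i - 1 := Nat.findGreatest_le _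
    have hi1 : 1 ≤ i := by
      obtain ⟨k, hk, -⟩ := id hB
      omega
    have hinj := Sum.inr.inj hpt
    generalize hg2 : Nat.findGreatest (fun j => Y[j]? = some cy) (i - 1) = g2 at hinj h2
    exact absurd hinj (by omega)
  · exact ⟨iff_of_false hA hB, fun hc => absurd hc hA⟩

theorem stmt7 (Sig Par : Set α) [DecidablePred (· ∈ Sig)]
    (hdisj : Disjoint Sig Par)
    (X Y : List α) (hX : ∀ c ∈ X, c ∈ Par) (hY : ∀ c ∈ Y, c ∈ Par)
    (hlen : X.length = Y.length) (h : prevEnc Sig X = prevEnc Sig Y) :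
    ∀ (i j : ℕ) (cxi cxj cyi cyj : α), X[i]? = some cxi → X[j]? = some cxj →
      Y[i]? = some cyi → Y[j]? = some cyj → (cxi = cxj ↔ cyi = cyj) := by
  have hX' : ∀ c ∈ X, c ∉ Sig := fun c hc => Set.disjoint_right.mp hdisj (hX c hc)
  have hY' : ∀ c ∈ Y, c ∉ Sig := fun c hc => Set.disjoint_right.mp hdisj (hY c hc)
  have hinfo := encInfo Sig X Y hX' hY' hlen h
  have hinfo' := encInfo Sig Y X hY' hX' hlen.symm h.symm
  have key : ∀ i j : ℕ, i < j → j < X.length → (X[i]? = X[j]? ↔ Y[i]? = Y[j]?) := by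
    intro i j hij hj
    constructor
    · exact prevAux X Y (fun i hi => (hinfo i hi).1) (fun i hi => (hinfo i hi).2) j i hij hj
    · exact prevAux Y X (fun i hi => (hinfo' i hi).1) (fun i hi => (hinfo' i hi).2) j i hij
        (hlen ▸ hj)
  intro i j cxi cxj cyi cyj hxi hxj hyi hyj
  have hi : i < X.length := (List.getElem?_eq_some_iff.mp hxi).1
  have hj : j < X.length := (List.getElem?_eq_some_iff.mp hxj).1
  have hxij : (X[i]? = X[j]?) ↔ (cxi = cxj) := by
    rw [hxi, hxj]; exact ⟨fun hh => Option.some.inj hh, fun hh => by rw [hh]⟩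
  have hyij : (Y[i]? = Y[j]?) ↔ (cyi = cyj) := by
    rw [hyi, hyj]; exact ⟨fun hh => Option.some.inj hh, fun hh => by rw [hh]⟩
  rcases lt_trichotomy i j with hlt | heq0 | hgt
  · rw [← hxij, ← hyij]; exact key i j hlt hj
  · subst heq0
    exact iff_of_true (Option.some.inj (hxi.symm.trans hxj)) (Option.some.inj (hyi.symm.trans hyj))
  · rw [← hxij, ← hyij]
    exact eq_comm.trans ((key j i hgt hi).trans eq_comm)
end

section
/- Reversed suffix links are consistent with removing the first character: if node v of PPH(T) has rslink(a, v) = u, then for every p-string X with prev(X) = u, we have prev(X[2..|X|]) = v. -/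
open List

variable {α : Type} [DecidableEq α]

section AuxStmt14
variable (Sig : Set α) [DecidablePred (· ∈ Sig)]

lemma prevEnc_length' (S : List α) : (prevEnc Sig S).length = S.length := by
  simp [prevEnc]

lemma prevEnc_getElem?' (S : List α) (i : ℕ) :
    (prevEnc Sig S)[i]? = if i < S.length then some (prevEncAt Sig S i) else none := by
  by_cases h : i < S.length
  · simp [prevEnc, List.getElem?_map, List.getElem?_range h, h]
  · have : (prevEnc Sig S).length ≤ i := by
      rw [prevEnc_length']; omega
    simp [List.getElem?_eq_none this, h]

lemma prevEncAt_inr_le' (S : List α) (i d : ℕ)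
    (h : prevEncAt Sig S i = Sum.inr d) : d ≤ i := by
  unfold prevEncAt at h
  cases hS : S[i]? with
  | none => rw [hS] at h; simp at h; omega
  | some c =>
    rw [hS] at h
    simp only at h
    split_ifs at h with h1 h2 <;> simp at h <;> omega

lemma findGreatest_shift' (P : ℕ → Prop) [DecidablePred P] (n k : ℕ)
    (hk1 : 1 ≤ k) (hkn : k ≤ n + 1) (hP : P k) :
    Nat.findGreatest (fun j => P (j + 1)) n + 1 = Nat.findGreatest P (n + 1) := by
  set g := Nat.findGreatest P (n + 1) with hg
  have hgk : k ≤ g := Nat.le_findGreatest hkn hP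
  have hg1 : 1 ≤ g := le_trans hk1 hgk
  have hgle : g ≤ n + 1 := Nat.findGreatest_le _
  have hPg : P g := Nat.findGreatest_spec hkn hP
  have hPg' : P (g - 1 + 1) := by rwa [Nat.sub_add_cancel hg1]
  have h1 : g - 1 ≤ Nat.findGreatest (fun j => P (j + 1)) n :=
    Nat.le_findGreatest (by omega) hPg'
  have h2 : Nat.findGreatest (fun j => P (j + 1)) n ≤ g - 1 := by
    by_contra hc
    push_neg at hc
    set g' := Nat.findGreatest (fun j => P (j + 1)) n with hg'
    have hle : g' ≤ n := Nat.findGreatest_le _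
    have hPg'' : P (g' + 1) :=
      Nat.findGreatest_spec (P := fun j => P (j + 1)) (by omega : (g:ℕ) - 1 ≤ n) hPg'
    exact Nat.findGreatest_is_greatest (n := n + 1) (k := g' + 1) (by omega) (by omega) hPg''
  omega

lemma prevEncAt_tail' (X : List α) (i : ℕ) :
    prevEncAt Sig (X.drop 1) i =
      if prevEncAt Sig X (i + 1) = Sum.inr (i + 1) then Sum.inr 0
      else prevEncAt Sig X (i + 1) := by
  have hdrop : ∀ j : ℕ, (X.drop 1)[j]? = X[j + 1]? := by
    intro j; rw [List.getElem?_drop, Nat.add_comm]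
  unfold prevEncAt
  rw [hdrop i]
  cases hS : X[i + 1]? with
  | none => simp
  | some c =>
    simp only
    by_cases hc : c ∈ Sig
    · simp [hc]
    · simp only [hc, if_false]
      by_cases hAX : ∃ j, j < i + 1 ∧ X[j]? = some c
      · obtain ⟨j0, hj0lt, hj0⟩ := hAX
        have hAXtrue : ((List.range (i + 1)).any fun j => decide (X[j]? = some c)) = true := by
          simp only [List.any_eq_true, List.mem_range, decide_eq_true_eq]
          exact ⟨j0, hj0lt, hj0⟩
        rw [hAXtrue]
        simp only [if_true]
        set g := Nat.findGreatest (fun j => X[j]? = some c) (i + 1 - 1) with hgdef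
        have hgi : g ≤ i := by
          have := Nat.findGreatest_le (P := fun j => X[j]? = some c) (i + 1 - 1)
          omega
        by_cases hg1 : 1 ≤ g
        · -- last occurrence at g ≥ 1; tail has occurrence at g - 1
          have hPg : X[g]? = some c := by
            have h' := Nat.findGreatest_spec (P := fun j => X[j]? = some c)
              (n := i + 1 - 1) (m := j0) (by omega) hj0
            simpa [hgdef] using h'
          have hi1 : 1 ≤ i := by omega
          have hAYtrue : ((List.range i).any fun j => decide ((X.drop 1)[j]? = some c)) = true := by
            simp only [List.any_eq_true, List.mem_range, decide_eq_true_eq]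
            refine ⟨g - 1, by omega, ?_⟩
            rw [hdrop, Nat.sub_add_cancel hg1]; exact hPg
          rw [hAYtrue]
          simp only [if_true]
          have hfun : (fun j => (X.drop 1)[j]? = some c) = (fun j => X[j + 1]? = some c) := by
            funext j; rw [hdrop]
          have hshift := findGreatest_shift' (fun j => X[j]? = some c) (i - 1) g hg1
            (by omega) hPg
          have hieq : i - 1 + 1 = i := by omega
          rw [hieq] at hshift
          have hgY : Nat.findGreatest (fun j => (X.drop 1)[j]? = some c) (i - 1) = g - 1 := by
            have hshift' : Nat.findGreatest (fun j => X[j + 1]? = some c) (i - 1) + 1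
                = Nat.findGreatest (fun j => X[j]? = some c) i := hshift
            have hcongr : Nat.findGreatest (fun j => (X.drop 1)[j]? = some c) (i - 1)
                = Nat.findGreatest (fun j => X[j + 1]? = some c) (i - 1) := by
              simp only [hdrop]
            have hgi' : Nat.findGreatest (fun j => X[j]? = some c) i = g := by
              simp only [Nat.add_sub_cancel] at hgdef
              exact hgdef.symm
            omega
          rw [hgY]
          have hne : (Sum.inr (i + 1 - g) : α ⊕ ℕ) ≠ Sum.inr (i + 1) := by
            intro hcon
            have : i + 1 - g = i + 1 := by injection hcon
            omega
          rw [if_neg hne]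
          congr 1
          omega
        · -- g = 0 : occurrence only at position 0
          have hg0 : g = 0 := by omega
          have hAYfalse : ((List.range i).any fun j => decide ((X.drop 1)[j]? = some c)) = false := by
            by_contra hcon
            rw [Bool.not_eq_false, List.any_eq_true] at hcon
            obtain ⟨j, hj, hjc⟩ := hcon
            rw [List.mem_range] at hj
            rw [decide_eq_true_eq, hdrop] at hjc
            have : j + 1 ≤ Nat.findGreatest (fun j => X[j]? = some c) (i + 1 - 1) :=
              Nat.le_findGreatest (by omega) hjc
            omega
          rw [hAYfalse]
          simp [hg0]
      · push_neg at hAX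
        have hAXfalse : ((List.range (i + 1)).any fun j => decide (X[j]? = some c)) = false := by
          by_contra hcon
          rw [Bool.not_eq_false, List.any_eq_true] at hcon
          obtain ⟨j, hj, hjc⟩ := hcon
          rw [List.mem_range] at hj
          rw [decide_eq_true_eq] at hjc
          exact absurd hjc (hAX j hj)
        have hAYfalse : ((List.range i).any fun j => decide ((X.drop 1)[j]? = some c)) = false := by
          by_contra hcon
          rw [Bool.not_eq_false, List.any_eq_true] at hcon
          obtain ⟨j, hj, hjc⟩ := hcon
          rw [List.mem_range] at hj
          rw [decide_eq_true_eq, hdrop] at hjc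
          exact absurd hjc (hAX (j + 1) (by omega))
        rw [hAXfalse, hAYfalse]
        simp

lemma mem_SHTNodes_aux' {β : Type} [DecidableEq β] (L : List (List β)) :
    ∀ (N : Finset (List β)) (x : List β),
      x ∈ L.foldl (fun N S => insert (S.take (insLen N S)) N) N →
      x ∈ N ∨ ∃ S ∈ L, ∃ m, x = S.take m := by
  induction L with
  | nil => intro N x hx; exact Or.inl hx
  | cons S L ih =>
    intro N x hx
    rcases ih _ x hx with h | ⟨S', hS', m, hm⟩
    · rcases Finset.mem_insert.mp h with h | h
      · exact Or.inr ⟨S, by simp, _, h⟩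
      · exact Or.inl h
    · exact Or.inr ⟨S', by simp [hS'], m, hm⟩

lemma pphNodes_entry_le' (T : List α) (w : List (α ⊕ ℕ)) (hw : w ∈ pphNodes Sig T)
    (i : ℕ) (d : ℕ) (hi : w[i]? = some (Sum.inr d)) : d ≤ i := by
  rcases mem_SHTNodes_aux' (pphSeq Sig T) ∅ w hw with h | ⟨S, hS, m, hm⟩
  · simp at h
  · subst hm
    rw [List.getElem?_take] at hi
    split_ifs at hi
    have hS' : S = [] ∨ ∃ k, S = prevEnc Sig (T.drop (T.length - 1 - k)) := by
      simp only [pphSeq, List.mem_cons, List.mem_map, List.mem_range] at hS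
      rcases hS with h | ⟨k, _, hk⟩
      · exact Or.inl h
      · exact Or.inr ⟨k, hk.symm⟩
    rcases hS' with rfl | ⟨k, rfl⟩
    · simp at hi
    · rw [prevEnc_getElem?'] at hi
      split_ifs at hi
      have : prevEncAt Sig (T.drop (T.length - 1 - k)) i = Sum.inr d := by
        injection hi
      exact prevEncAt_inr_le' Sig _ i d this

end AuxStmt14

theorem stmt14 (Sig Par : Set α) [DecidablePred (· ∈ Sig)]
    (hdisj : Disjoint Sig Par) (T : List α)
    (a : α ⊕ ℕ) (v u : List (α ⊕ ℕ))
    (h : RSLink Sig T.length (pphNodes Sig T) a v u) :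
    ∀ X : List α, (∀ c ∈ X, c ∈ Sig ∪ Par) → prevEnc Sig X = u →
      prevEnc Sig (X.drop 1) = v := by
  obtain ⟨hv, hu, hcase⟩ := h
  intro X _hXchars hprev
  have hlenu : u.length = X.length := by rw [← hprev, prevEnc_length']
  have key : ∀ i : ℕ, i + 1 < X.length → u[i + 1]? = some (prevEncAt Sig X (i + 1)) := by
    intro i hi
    rw [← hprev, prevEnc_getElem?', if_pos hi]
  rcases hcase with ⟨_hsz, huav⟩ | ⟨d, _had, hd1, _hdn, hvd, huw⟩
  · -- case u = a :: v
    have hXlen : X.length = v.length + 1 := by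
      rw [← hlenu, huav]; simp
    apply List.ext_getElem?
    intro i
    by_cases hiv : i < v.length
    · rw [prevEnc_getElem?', if_pos (by rw [List.length_drop]; omega)]
      have hkey := key i (by omega)
      rw [huav] at hkey
      simp only [List.getElem?_cons_succ] at hkey
      obtain ⟨e, hve, hpe⟩ : ∃ e, v[i]? = some e ∧ prevEncAt Sig X (i + 1) = e := by
        refine ⟨prevEncAt Sig X (i + 1), hkey, rfl⟩
      have hne : e ≠ Sum.inr (i + 1) := by
        intro hcon
        subst hcon
        have := pphNodes_entry_le' Sig T v hv i (i + 1) hve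
        omega
      rw [prevEncAt_tail', hpe, if_neg hne, hve]
    · rw [prevEnc_getElem?', if_neg (by rw [List.length_drop]; omega),
        List.getElem?_eq_none (by omega)]
  · -- case u = 0 :: (v.take (d-1) ++ [inr d] ++ v.drop d)
    have hdlen : d - 1 < v.length := by
      by_contra hcon
      push_neg at hcon
      rw [List.getElem?_eq_none hcon] at hvd
      exact absurd hvd (by simp)
    have hdv : d ≤ v.length := by omega
    set w : List (α ⊕ ℕ) := v.take (d - 1) ++ [Sum.inr d] ++ v.drop d with hwdef
    have hwlen : w.length = v.length := by
      simp only [hwdef, List.length_append, List.length_take, List.length_drop,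
        List.length_cons, List.length_nil]
      omega
    have hXlen : X.length = v.length + 1 := by
      rw [← hlenu, huw]
      simp only [List.length_cons]
      omega
    have hwget : ∀ i : ℕ, i < v.length →
        w[i]? = if i = d - 1 then some (Sum.inr d) else v[i]? := by
      intro i hi
      rw [hwdef]
      rcases lt_trichotomy i (d - 1) with hlt | heq | hgt
      · rw [if_neg (by omega)]
        rw [List.getElem?_append, if_pos (by simp only [List.length_take,
            List.length_append, List.length_cons, List.length_nil]; omega),
          List.getElem?_append, if_pos (by simp only [List.length_take,
            List.length_append, List.length_cons, List.length_nil]; omega),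
          List.getElem?_take, if_pos hlt]
      · subst heq
        rw [if_pos rfl]
        rw [List.getElem?_append, if_pos (by simp only [List.length_take,
            List.length_append, List.length_cons, List.length_nil]; omega),
          List.getElem?_append, if_neg (by simp only [List.length_take,
            List.length_append, List.length_cons, List.length_nil]; omega)]
        simp [List.length_take, Nat.min_eq_left (le_of_lt hdlen)]
      · rw [if_neg (by omega)]
        rw [List.getElem?_append, if_neg (by simp only [List.length_take,
            List.length_append, List.length_cons, List.length_nil]; omega)]
        rw [List.getElem?_drop]
        congr 1
        simp only [List.length_take, List.length_append, List.length_cons, List.length_nil]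
        omega
    apply List.ext_getElem?
    intro i
    by_cases hiv : i < v.length
    · rw [prevEnc_getElem?', if_pos (by rw [List.length_drop]; omega)]
      have hkey := key i (by omega)
      rw [huw] at hkey
      simp only [List.getElem?_cons_succ] at hkey
      rw [hwget i hiv] at hkey
      by_cases hid : i = d - 1
      · rw [if_pos hid] at hkey
        have hpe : prevEncAt Sig X (i + 1) = Sum.inr d := by
          injection hkey.symm
        have hid' : i + 1 = d := by omega
        rw [prevEncAt_tail', hpe, if_pos (by rw [hid']), hid, hvd]
      · rw [if_neg hid] at hkey
        obtain ⟨e, hve, hpe⟩ : ∃ e, v[i]? = some e ∧ prevEncAt Sig X (i + 1) = e := by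
          cases hv' : v[i]? with
          | none => rw [hv'] at hkey; exact absurd hkey (by simp)
          | some e =>
            rw [hv'] at hkey
            exact ⟨e, rfl, by injection hkey.symm⟩
        have hne : e ≠ Sum.inr (i + 1) := by
          intro hcon
          subst hcon
          have := pphNodes_entry_le' Sig T v hv i (i + 1) hve
          omega
        rw [prevEncAt_tail', hpe, if_neg hne, hve]
    · rw [prevEnc_getElem?', if_neg (by rw [List.length_drop]; omega),
        List.getElem?_eq_none (by omega)]
end

section
/- Reversed suffix links are monotone along ancestors: suppose node v of PPH(T) has reversed suffix link rslink(a, v) and u is an ancestor of v (a proper prefix of v as a node). If a ∈ Σ ∪ {0}, then rslink(a, u) is defined. If a ∈ [1..n−1] and |u| ≥ a, then rslink(a, u) is defined; if a ∈ [1..n−1] and |u| < a, then rslink(0, u) is defined. -/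
open List

variable {α : Type} [DecidableEq α]

lemma aux_head?_le_of_mem {l : List ℕ} (hs : l.Pairwise (· < ·)) {h m : ℕ}
    (hh : l.head? = some h) (hm : m ∈ l) : h ≤ m := by
  cases l with
  | nil => simp at hh
  | cons x t =>
    simp only [List.head?_cons, Option.some.injEq] at hh
    subst hh
    rcases List.mem_cons.mp hm with rfl | hm
    · exact le_refl _
    · exact le_of_lt ((List.pairwise_cons.mp hs).1 m hm)

lemma aux_take_mem_of_lt_insLen {β : Type} [DecidableEq β] (N : Finset (List β)) (S : List β)
    {m : ℕ} (h1 : m < insLen N S) (h2 : m ≤ S.length) : S.take m ∈ N := by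
  by_contra hc
  have hm : m ∈ (List.range (S.length + 1)).filter (fun m => decide (S.take m ∉ N)) := by
    simp only [List.mem_filter, List.mem_range, decide_eq_true_eq]
    exact ⟨Nat.lt_succ_of_le h2, hc⟩
  unfold insLen at h1
  cases hh : (((List.range (S.length + 1)).filter (fun m => decide (S.take m ∉ N))).head?) with
  | none =>
    rw [List.head?_eq_none_iff] at hh
    rw [hh] at hm; simp at hm
  | some k =>
    rw [hh] at h1
    simp only [Option.getD_some] at h1
    have hp : ((List.range (S.length + 1)).filter
        (fun m => decide (S.take m ∉ N))).Pairwise (· < ·) :=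
      List.Pairwise.sublist List.filter_sublist List.pairwise_lt_range
    have := aux_head?_le_of_mem hp hh hm
    omega

def PrefClosed {β : Type} (N : Finset (List β)) : Prop :=
  ∀ u x : List β, u <+: x → x ∈ N → u ∈ N

lemma aux_pc_insert {β : Type} [DecidableEq β] {N : Finset (List β)} (h : PrefClosed N)
    (S : List β) : PrefClosed (insert (S.take (insLen N S)) N) := by
  intro u x hux hx
  rw [Finset.mem_insert] at hx ⊢
  rcases hx with rfl | hx
  · have hus : u <+: S := hux.trans (List.take_prefix _ _)
    have hlen : u = S.take u.length := List.prefix_iff_eq_take.mp hus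
    have hle : u.length ≤ min (insLen N S) S.length := by
      simpa using hux.length_le
    rcases lt_or_eq_of_le (le_trans hle (min_le_left _ _)) with hlt | heq
    · right
      rw [hlen]
      exact aux_take_mem_of_lt_insLen N S hlt (le_trans hle (min_le_right _ _))
    · left; rw [hlen, heq]
  · exact Or.inr (h u x hux hx)

lemma aux_pc_foldl {β : Type} [DecidableEq β] (L : List (List β)) :
    ∀ N : Finset (List β), PrefClosed N →
      PrefClosed (L.foldl (fun N S => insert (S.take (insLen N S)) N) N) := by
  induction L with
  | nil => intro N h; exact h
  | cons S L ih =>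
    intro N h
    exact ih _ (aux_pc_insert h S)

lemma aux_pc_pph (Sig : Set α) [DecidablePred (· ∈ Sig)] (T : List α) :
    PrefClosed (pphNodes Sig T) := by
  apply aux_pc_foldl
  intro u x _ hx
  exact absurd hx (Finset.notMem_empty x)

theorem stmt15 (Sig : Set α) [DecidablePred (· ∈ Sig)] (T : List α)
    (a : α ⊕ ℕ) (v w u : List (α ⊕ ℕ))
    (h : RSLink Sig T.length (pphNodes Sig T) a v w)
    (hu : u <+: v) (hne : u ≠ v) :
    (StaticOrZero Sig a → ∃ w', RSLink Sig T.length (pphNodes Sig T) a u w') ∧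
    (∀ d : ℕ, a = Sum.inr d → 1 ≤ d → d ≤ T.length - 1 →
      (d ≤ u.length → ∃ w', RSLink Sig T.length (pphNodes Sig T) a u w') ∧
      (u.length < d →
        ∃ w', RSLink Sig T.length (pphNodes Sig T) (Sum.inr 0) u w')) := by 
  obtain ⟨hv, hw, hcase⟩ := h
  have hpc := aux_pc_pph Sig T
  have huN : u ∈ pphNodes Sig T := hpc u v hu hv
  obtain ⟨t, ht⟩ := hu
  constructor
  · intro hsz
    rcases hcase with ⟨_, rfl⟩ | ⟨d, rfl, hd1, _, _, _⟩
    · refine ⟨a :: u, huN, hpc _ _ ⟨t, by rw [List.cons_append, ht]⟩ hw, Or.inl ⟨hsz, rfl⟩⟩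
    · rcases hsz with ⟨c, _, hc⟩ | hc
      · exact absurd hc (by simp)
      · simp only [Sum.inr.injEq] at hc
        omega
  · intro d ha hd1 hd2
    rcases hcase with ⟨hsz, _⟩ | ⟨d', ha', hd1', hd2', hvd, hweq⟩
    · subst ha
      rcases hsz with ⟨c, _, hc⟩ | hc
      · exact absurd hc (by simp)
      · simp only [Sum.inr.injEq] at hc
        omega
    · have hdd : d = d' := by rw [ha] at ha'; simpa using ha'
      subst hdd
      subst ha
      constructor
      · intro hdu
        refine ⟨Sum.inr 0 :: (u.take (d - 1) ++ [Sum.inr d] ++ u.drop d), huN, ?_, ?_⟩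
        · apply hpc _ _ _ hw
          rw [hweq]
          refine ⟨t, ?_⟩
          have h1 : v.take (d - 1) = u.take (d - 1) := by
            rw [← ht, List.take_append,
              Nat.sub_eq_zero_of_le (by omega : d - 1 ≤ u.length), List.take_zero,
              List.append_nil]
          have h2 : v.drop d = u.drop d ++ t := by
            rw [← ht, List.drop_append,
              Nat.sub_eq_zero_of_le hdu, List.drop_zero]
          rw [h1, h2]
          simp
        · refine Or.inr ⟨d, rfl, hd1, hd2, ?_, rfl⟩
          rw [← hvd, ← ht]
          rw [List.getElem?_append_left (by omega : d - 1 < u.length)]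
      · intro hud
        refine ⟨Sum.inr 0 :: u, huN, ?_, Or.inl ⟨Or.inr rfl, rfl⟩⟩
        apply hpc _ _ _ hw
        rw [hweq]
        have h1 : u <+: v.take (d - 1) := by
          rw [← ht, List.take_append]
          have : u.take (d - 1) = u := List.take_of_length_le (by omega)
          rw [this]
          exact ⟨_, rfl⟩
        obtain ⟨s, hs⟩ := h1
        exact ⟨s ++ [Sum.inr d] ++ v.drop d, by rw [← hs]; simp⟩
end

section
/- For a p-string T of length n, computing prev(T[i−1..]) from prev(T[i..]) only requires changing the first entry and at most one later entry: prev(T[i−1..]) = c · prev(T[i..]) with the entry at the position of the first occurrence of T[i−1] in T[i..] (if any, at distance d) changed from 0 to d, where c = T[i−1] if T[i−1] ∈ Σ and c = 0 otherwise. -/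
open List

variable {α : Type} [DecidableEq α]

lemma fg_shift {P Q : ℕ → Prop} [DecidablePred P] [DecidablePred Q]
    (h : ∀ j, Q (j+1) ↔ P j) : ∀ {n : ℕ}, (∃ j ≤ n, P j) →
    Nat.findGreatest Q (n+1) = Nat.findGreatest P n + 1 := by
  intro n
  induction n with
  | zero =>
    rintro ⟨j, hj, hp⟩
    interval_cases j
    rw [Nat.findGreatest_succ]
    simp [h 0, hp, Nat.findGreatest_zero]
  | succ n ih =>
    rintro ⟨j, hj, hp⟩
    rw [Nat.findGreatest_succ (P := Q), Nat.findGreatest_succ (P := P)]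
    by_cases hP : P (n+1)
    · simp [hP, (h (n+1)).mpr hP]
    · have hQ : ¬ Q (n+2) := fun hq => hP ((h (n+1)).mp hq)
      have hj' : j ≤ n := by
        rcases Nat.lt_succ_iff_lt_or_eq.mp (Nat.lt_succ_of_le hj) with h1 | h1
        · exact Nat.lt_succ_iff.mp h1
        · exact absurd (h1 ▸ hp) hP
      simp only [hP, hQ, if_neg, ite_false]
      exact ih ⟨j, hj', hp⟩

lemma prevEncAt_cons_zero (Sig : Set α) [DecidablePred (· ∈ Sig)] (c0 : α) (S : List α) :
    prevEncAt Sig (c0 :: S) 0 = if c0 ∈ Sig then Sum.inl c0 else Sum.inr 0 := by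
  simp [prevEncAt]

lemma prevEncAt_cons_shift (Sig : Set α) [DecidablePred (· ∈ Sig)] (c0 : α) (S : List α)
    (i : ℕ) (c : α) (hgi : S[i]? = some c)
    (hc : c ∉ Sig → c0 = c → ∃ j, j < i ∧ S[j]? = some c) :
    prevEncAt Sig (c0 :: S) (i+1) = prevEncAt Sig S i := by
  by_cases hs : c ∈ Sig
  · simp [prevEncAt, hgi, hs]
  · by_cases hany : (List.range i).any (fun j => decide (S[j]? = some c))
    · obtain ⟨j, hj, hP⟩ := by simpa using (List.any_eq_true.mp hany)
      have hi0 : i ≠ 0 := Nat.ne_zero_of_lt hj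
      obtain ⟨k, hk⟩ : ∃ k, i = k + 1 := ⟨i - 1, (Nat.succ_pred_eq_of_ne_zero hi0).symm⟩
      have hfg : Nat.findGreatest (fun j => (c0 :: S)[j]? = some c) i
          = Nat.findGreatest (fun j => S[j]? = some c) (i-1) + 1 := by
        rw [hk, Nat.add_sub_cancel]
        exact fg_shift (fun j => by simp) ⟨j, by omega, hP⟩
      have hanyQ : (List.range (i+1)).any (fun m => decide ((c0 :: S)[m]? = some c)) := by
        refine List.any_eq_true.mpr ⟨j+1, ?_, ?_⟩
        · simp; omega
        · simp [hP]
      simp only [prevEncAt, hgi, List.getElem?_cons_succ, hs, if_neg, ite_false, hany,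
        hanyQ, if_pos, ite_true, Nat.add_sub_cancel, hfg]
      congr 1
      have hle : Nat.findGreatest (fun j => S[j]? = some c) (i-1) ≤ i - 1 :=
        Nat.findGreatest_le _
      omega
    · have hne : c0 ≠ c := by
        intro h
        obtain ⟨j, hj, hP⟩ := hc hs h
        exact hany (List.any_eq_true.mpr ⟨j, by simpa using hj, by simp [hP]⟩)
      have hanyQ : ¬ (List.range (i+1)).any (fun m => decide ((c0 :: S)[m]? = some c)) := by
        simp only [List.any_eq_true, not_exists]
        rintro m ⟨hm, hmP⟩
        simp only [List.mem_range] at hm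
        simp only [decide_eq_true_eq] at hmP
        match m with
        | 0 => exact hne (by simpa using hmP)
        | k+1 =>
          apply hany
          refine List.any_eq_true.mpr ⟨k, by simpa using Nat.lt_of_succ_lt_succ hm, ?_⟩
          simpa using hmP
      simp [prevEncAt, hgi, hs, hany, hanyQ]

lemma prevEncAt_cons_new (Sig : Set α) [DecidablePred (· ∈ Sig)] (c0 : α) (S : List α)
    (i : ℕ) (c : α) (hgi : S[i]? = some c) (hs : c ∉ Sig) (heq : c0 = c)
    (hno : ∀ j, j < i → S[j]? ≠ some c) :
    prevEncAt Sig (c0 :: S) (i+1) = Sum.inr (i+1) := by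
  have hanyQ : (List.range (i+1)).any (fun m => decide ((c0 :: S)[m]? = some c)) :=
    List.any_eq_true.mpr ⟨0, by simp, by simp [heq]⟩
  have hfg : Nat.findGreatest (fun j => (c0 :: S)[j]? = some c) i = 0 := by
    rw [Nat.findGreatest_eq_zero_iff]
    intro m hm hmi hP
    match m, hm with
    | k+1, _ =>
      simp only [List.getElem?_cons_succ] at hP
      exact hno k (Nat.lt_of_succ_le hmi) hP
  simp [prevEncAt, hgi, hs, hanyQ, hfg]

lemma prevEnc_cons (Sig : Set α) [DecidablePred (· ∈ Sig)] (c0 : α) (S : List α) :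
    prevEnc Sig (c0 :: S) = prevEncAt Sig (c0 :: S) 0 ::
      (List.range S.length).map (fun i => prevEncAt Sig (c0 :: S) (i+1)) := by
  simp [prevEnc, List.range_succ_eq_map, Function.comp]

theorem stmt19 (Sig Par : Set α) [DecidablePred (· ∈ Sig)]
    (hdisj : Disjoint Sig Par) (c0 : α) (S : List α)
    (hc0 : c0 ∈ Sig ∪ Par) (hS : ∀ c ∈ S, c ∈ Sig ∪ Par) :
    (c0 ∈ Sig → prevEnc Sig (c0 :: S) = Sum.inl c0 :: prevEnc Sig S) ∧
    (c0 ∈ Par → c0 ∉ S → prevEnc Sig (c0 :: S) = Sum.inr 0 :: prevEnc Sig S) ∧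
    (c0 ∈ Par → c0 ∈ S →
      prevEnc Sig (c0 :: S) =
        Sum.inr 0 :: (prevEnc Sig S).set (S.idxOf c0)
          (Sum.inr (S.idxOf c0 + 1))) := by
  refine ⟨?_, ?_, ?_⟩
  · intro h1
    rw [prevEnc_cons, prevEncAt_cons_zero, if_pos h1]
    congr 1
    rw [prevEnc]
    apply List.map_congr_left
    intro i hi
    simp only [List.mem_range] at hi
    exact prevEncAt_cons_shift Sig c0 S i S[i] (List.getElem?_eq_getElem hi)
      (fun hs heq => absurd (heq ▸ h1) hs)
  · intro h1 h2
    have hc0 : c0 ∉ Sig := fun h => Set.disjoint_left.mp hdisj h h1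
    rw [prevEnc_cons, prevEncAt_cons_zero, if_neg hc0]
    congr 1
    rw [prevEnc]
    apply List.map_congr_left
    intro i hi
    simp only [List.mem_range] at hi
    refine prevEncAt_cons_shift Sig c0 S i S[i] (List.getElem?_eq_getElem hi)
      (fun hs heq => absurd (by rw [heq]; exact List.getElem_mem hi) h2)
  · intro h1 h2
    have hc0 : c0 ∉ Sig := fun h => Set.disjoint_left.mp hdisj h h1
    set m := S.idxOf c0 with hm
    have hmlt : m < S.length := List.idxOf_lt_length_iff.mpr h2
    have hSm : S[m] = c0 := List.getElem_idxOf hmlt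
    have hno : ∀ j, j < m → S[j]? ≠ some c0 := by
      intro j hj hP
      have hjlt : j < S.length := hj.trans hmlt
      rw [List.getElem?_eq_getElem hjlt] at hP
      have hlt : j < S.findIdx (· == c0) := hj
      have := List.not_of_lt_findIdx hlt
      simp only [beq_eq_false_iff_ne, ne_eq] at this
      exact this (Option.some.inj hP)
    rw [prevEnc_cons, prevEncAt_cons_zero, if_neg hc0]
    congr 1
    apply List.ext_getElem
    · simp [prevEnc]
    · intro i hi1 hi2
      have hiS : i < S.length := by simpa using hi1
      simp only [List.getElem_map, List.getElem_range, List.getElem_set]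
      by_cases him : m = i
      · rw [if_pos him, ← him]
        exact prevEncAt_cons_new Sig c0 S m c0
          (by rw [List.getElem?_eq_getElem hmlt, hSm]) (fun h => hc0 h) rfl hno
      · rw [if_neg him]
        have hRHS : (prevEnc Sig S)[i]'(by simpa [prevEnc] using hiS) = prevEncAt Sig S i := by
          simp [prevEnc]
        rw [hRHS]
        refine prevEncAt_cons_shift Sig c0 S i S[i] (List.getElem?_eq_getElem hiS)
          (fun hs heq => ?_)
        have hmle : m ≤ i := by
          by_contra hlt
          exact hno i (Nat.lt_of_not_le hlt)
            (by rw [List.getElem?_eq_getElem hiS, ← heq])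
        exact ⟨m, lt_of_le_of_ne hmle him,
          by rw [List.getElem?_eq_getElem hmlt, hSm, heq]⟩
end
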